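/- Under the standing assumptions with |Cl(R)| ≠ 2 and O transfer Krull: if P₁, P₂, P₃ are prime ideals of R coprime to f with ord([P₁]) = ord([P₂]) = 2, [P₁] ≠ [P₂], and [P₃] = [P₁] + [P₂], then the principal ideal P₁P₂P₃ is generated by an element of O up to R-units. -/

import Mathlib

open scoped nonZeroDivisors

section MonoidDefs
variable {H B : Type*} [CommMonoid H] [CommMonoid B]

/-- The set of lengths of `a`: `{0}` for units, otherwise the set of `k` such that
`a` is a product of `k` atoms (irreducible elements). -/
def lengthsSet (a : H) : Set ℕ :=
  {k | (IsUnit a ∧ k = 0) ∨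
    (¬ IsUnit a ∧ ∃ l : Multiset H, Multiset.card l = k ∧ (∀ x ∈ l, Irreducible x) ∧ l.prod = a)}

/-- A transfer homomorphism: (T1) `B = θ(H)·B^×` and `θ⁻¹(B^×) = H^×`;
(T2) factorizations of `θ u` lift to factorizations of `u` up to associates. -/
def IsTransferHom (θ : H →* B) : Prop :=
  (∀ b : B, ∃ u : H, ∃ ε : Bˣ, b = θ u * ε) ∧
  (∀ u : H, IsUnit (θ u) → IsUnit u) ∧
  (∀ u : H, ∀ b c : B, θ u = b * c →
    ∃ v w : H, u = v * w ∧ Associated (θ v) b ∧ Associated (θ w) c)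

/-- A Krull monoid: a monoid admitting a divisor homomorphism into a
free abelian monoid. -/
def IsKrullMonoid (H : Type*) [CommMonoid H] : Prop :=
  ∃ (ι : Type) (d : H →* Multiplicative (ι →₀ ℕ)), ∀ a b : H, d a ∣ d b → a ∣ b

/-- Half-factorial: all factorizations of an element into atoms have the same length. -/
def IsHalfFactorial (A : Type*) [CommMonoid A] : Prop :=
  ∀ (a : A) (l m : Multiset A), (∀ x ∈ l, Irreducible x) → (∀ x ∈ m, Irreducible x) →
    l.prod = a → m.prod = a → Multiset.card l = Multiset.card m

/-- An absolutely irreducible element: an atom all of whose powers factor uniquely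
into atoms, up to associates. -/
def AbsolutelyIrreducible (a : H) : Prop :=
  Irreducible a ∧ ∀ n : ℕ, 0 < n → ∀ l m : Multiset H,
    (∀ x ∈ l, Irreducible x) → (∀ x ∈ m, Irreducible x) →
    l.prod = a ^ n → m.prod = a ^ n → Multiset.Rel Associated l m

end MonoidDefs

section RingDefs
variable {R : Type*} [CommRing R]

/-- The conductor of a subring `O ⊆ R`: the largest ideal of `R` contained in `O`. -/
def Subring.conductor (O : Subring R) : Ideal R where
  carrier := {x | ∀ r : R, x * r ∈ O}
  add_mem' := by
    intro a b ha hb r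
    have h : (a + b) * r = a * r + b * r := by ring
    rw [h]; exact O.add_mem (ha r) (hb r)
  zero_mem' := by intro r; simpa using O.zero_mem
  smul_mem' := by
    intro c x hx r
    have h : c • x * r = x * (c * r) := by simp [smul_eq_mul]; ring
    rw [h]; exact hx (c * r)

/-- `a` is a regular element modulo the ideal `f`. -/
def RegF (f : Ideal R) (a : R) : Prop := IsUnit (Ideal.Quotient.mk f a)

end RingDefs

section TK
variable {K : Type*} [CommRing K]

/-- `x` and `y` are associated within the submonoid `H` of `K`. -/
def AssocIn (H : Submonoid K) (x y : K) : Prop :=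
  ∃ ε ∈ H, (∃ ε' ∈ H, ε * ε' = 1) ∧ x = y * ε

end TK

variable {R₀ : Type*}

/-- `H` is a Krull overmonoid of `O^∙` inside the quotient field of `O` (which is the
quotient field of `R`), with `O^∙ ⊆ H ⊆ q(O^∙)`, such that the inclusion `O^∙ ↪ H`
is a transfer homomorphism; this witnesses that `O` is transfer Krull. -/
structure IsTKOvermonoid {R : Type*} [CommRing R] [IsDomain R] [IsDedekindDomain R]
    (O : Subring R) (H : Submonoid (FractionRing R)) : Prop where
  nonzero : ∀ x ∈ H, x ≠ 0
  incl : ∀ a : R, a ∈ O → a ≠ 0 → algebraMap R (FractionRing R) a ∈ H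
  inQuot : ∀ x ∈ H, ∃ a b : R, a ∈ O ∧ b ∈ O ∧ a ≠ 0 ∧ b ≠ 0 ∧
    x * algebraMap R (FractionRing R) b = algebraMap R (FractionRing R) a
  krull : IsKrullMonoid ↥H
  t1 : ∀ x ∈ H, ∃ a : R, a ∈ O ∧ a ≠ 0 ∧ ∃ ε ∈ H, (∃ ε' ∈ H, ε * ε' = 1) ∧
    x = algebraMap R (FractionRing R) a * ε
  t1' : ∀ a : R, a ∈ O → a ≠ 0 →
    (∃ y ∈ H, algebraMap R (FractionRing R) a * y = 1) → ∃ b ∈ O, a * b = 1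
  t2 : ∀ a : R, a ∈ O → a ≠ 0 → ∀ x ∈ H, ∀ y ∈ H,
    algebraMap R (FractionRing R) a = x * y →
    ∃ v w : R, v ∈ O ∧ w ∈ O ∧ a = v * w ∧
      AssocIn H (algebraMap R (FractionRing R) v) x ∧
      AssocIn H (algebraMap R (FractionRing R) w) y

set_option linter.unusedSectionVars false
section AuxGeneric

/-- In the ideal monoid, associated elements are equal. -/
lemma tkAux_assoc_ideal_eq {R : Type*} [CommRing R] {I J : Ideal R}
    (h : Associated I J) : I = J := by
  obtain ⟨u, hu⟩ := h
  obtain ⟨v, hv⟩ := u.isUnit.exists_right_inv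
  have hvtop : (u : Ideal R) = ⊤ := by
    have h1 : (⊤ : Ideal R) = (u : Ideal R) * v := by
      simpa [Ideal.one_eq_top] using hv.symm
    have h2 : (u : Ideal R) * v ≤ (u : Ideal R) := Ideal.mul_le_left
    exact le_antisymm le_top (h1 ▸ h2)
  rw [← hu, hvtop, Ideal.mul_top]

lemma tkAux_span_list_prod {R : Type*} [CommRing R] (M : List R) :
    Ideal.span {M.prod} = (M.map fun v => Ideal.span {v}).prod := by
  induction M with
  | nil => simp [Ideal.one_eq_top, Ideal.span_singleton_one]
  | cons a M ih =>
    simp only [List.prod_cons, List.map_cons, ← Ideal.span_singleton_mul_span_singleton, ih]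

lemma tkAux_pow_dvd_list {R : Type*} [CommRing R] (Q : Ideal R) (M : List (Ideal R))
    (h : ∀ I ∈ M, Q ∣ I) : Q ^ M.length ∣ M.prod := by
  induction M with
  | nil => simp
  | cons a M ih =>
    simp only [List.length_cons, List.prod_cons, pow_succ]
    rw [mul_comm]
    exact mul_dvd_mul (h a List.mem_cons_self) (ih fun I hI => h I (List.mem_cons_of_mem _ hI))

lemma tkAux_order_two_indep {G : Type*} [CommGroup G] {g₁ g₂ : G}
    (h1 : g₁ ^ 2 = 1) (h2 : g₂ ^ 2 = 1) (hg1 : g₁ ≠ 1) (hg2 : g₂ ≠ 1) (hne : g₁ ≠ g₂)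
    (a b : ℕ) (hab : g₁ ^ a * g₂ ^ b = 1) : a % 2 = 0 ∧ b % 2 = 0 := by
  have ha : g₁ ^ a = g₁ ^ (a % 2) := by
    conv_lhs => rw [← Nat.div_add_mod a 2]
    rw [pow_add, pow_mul, h1, one_pow, one_mul]
  have hb : g₂ ^ b = g₂ ^ (b % 2) := by
    conv_lhs => rw [← Nat.div_add_mod b 2]
    rw [pow_add, pow_mul, h2, one_pow, one_mul]
  rw [ha, hb] at hab
  have ha2 : a % 2 = 0 ∨ a % 2 = 1 := by omega
  have hb2 : b % 2 = 0 ∨ b % 2 = 1 := by omega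
  rcases ha2 with ha2 | ha2 <;> rcases hb2 with hb2 | hb2 <;> rw [ha2, hb2] at hab
  · exact ⟨ha2, hb2⟩
  · simp only [pow_zero, pow_one, one_mul] at hab; exact absurd hab hg2
  · simp only [pow_zero, pow_one, mul_one] at hab; exact absurd hab hg1
  · exfalso
    simp only [pow_one] at hab
    apply hne
    have : g₂ = g₁⁻¹ := by rw [eq_inv_iff_mul_eq_one, mul_comm]; exact hab
    rw [this, eq_inv_iff_mul_eq_one, ← pow_two, h1]

end AuxGeneric

section AuxTK

variable {R : Type*} [CommRing R] [IsDomain R] [IsDedekindDomain R]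
  (O : Subring R) (H : Submonoid (FractionRing R))

/-- `x` is an "`H`-unit": it lies in `H` together with an inverse. -/
def IsGH (H : Submonoid (FractionRing R)) (x : FractionRing R) : Prop :=
  x ∈ H ∧ ∃ y ∈ H, x * y = 1

variable {O H}

namespace IsGH

lemma one : IsGH H (1 : FractionRing R) := ⟨H.one_mem, 1, H.one_mem, one_mul 1⟩

lemma mul {x y : FractionRing R} (hx : IsGH H x) (hy : IsGH H y) : IsGH H (x * y) := by
  obtain ⟨hxH, x', hx'H, hxx'⟩ := hx
  obtain ⟨hyH, y', hy'H, hyy'⟩ := hy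
  exact ⟨H.mul_mem hxH hyH, x' * y', H.mul_mem hx'H hy'H, by
    calc x * y * (x' * y') = (x * x') * (y * y') := by ring
    _ = 1 := by rw [hxx', hyy', one_mul]⟩

lemma pow {x : FractionRing R} (hx : IsGH H x) (n : ℕ) : IsGH H (x ^ n) := by
  induction n with
  | zero => simpa using IsGH.one
  | succ n ih => rw [pow_succ]; exact ih.mul hx

lemma inv {x : FractionRing R} (hx : IsGH H x) : ∃ y, IsGH H y ∧ x * y = 1 := by
  obtain ⟨hxH, y, hyH, hxy⟩ := hx
  exact ⟨y, ⟨hyH, x, hxH, by rw [mul_comm]; exact hxy⟩, hxy⟩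

end IsGH

lemma tkAux_assocIn_isGH {x y : FractionRing R}
    (h : AssocIn H x y) : ∃ g, IsGH H g ∧ x = y * g := by
  obtain ⟨ε, hεH, ⟨ε', hε'H, hεε'⟩, hx⟩ := h
  exact ⟨ε, ⟨hεH, ε', hε'H, hεε'⟩, hx⟩

/-- Elements of the conductor lie in `O`. -/
lemma tkAux_conductor_mem {m : R} (hm : m ∈ O.conductor) : m ∈ O := by
  simpa using hm 1

/-- Powers with exponent the cardinality of `(R/f)ˣ` of elements coprime to the conductor
lie in `O`. -/
lemma tkAux_pow_card_mem (hfin : Finite (R ⧸ O.conductor)) {x : R}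
    (hcop : Ideal.span {x} ⊔ O.conductor = ⊤) :
    x ^ Nat.card (R ⧸ O.conductor)ˣ ∈ O := by
  set f := O.conductor with hf
  have hfint : Finite (R ⧸ f) := hfin
  have h1 : (1 : R) ∈ Ideal.span {x} ⊔ f := by rw [hcop]; trivial
  obtain ⟨y, hy, z, hz, hyz⟩ := Submodule.mem_sup.mp h1
  obtain ⟨r, hr⟩ := Ideal.mem_span_singleton'.mp hy
  have hu : IsUnit (Ideal.Quotient.mk f x) := by
    refine IsUnit.of_mul_eq_one (Ideal.Quotient.mk f r) ?_
    have : Ideal.Quotient.mk f (x * r) = Ideal.Quotient.mk f 1 := by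
      rw [← hyz, ← hr]
      have hz0 : Ideal.Quotient.mk f z = 0 := (Ideal.Quotient.eq_zero_iff_mem).mpr hz
      rw [map_add, hz0, add_zero, mul_comm]
    rw [← map_mul, this, map_one]
  set n₀ := Nat.card (R ⧸ f)ˣ with hn₀
  have hpow : (Ideal.Quotient.mk f x) ^ n₀ = 1 := by
    have := pow_card_eq_one' (x := hu.unit)
    have h2 : ((hu.unit ^ n₀ : (R ⧸ f)ˣ) : R ⧸ f) = ((1 : (R ⧸ f)ˣ) : R ⧸ f) := by rw [this]
    simpa [hu.unit_spec] using h2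
  have hsub : x ^ n₀ - 1 ∈ f := by
    rw [← Ideal.Quotient.eq, map_pow, hpow, map_one]
  have : x ^ n₀ = (x ^ n₀ - 1) + 1 := by ring
  rw [this]
  exact O.add_mem (tkAux_conductor_mem hsub) O.one_mem

end AuxTK

section AuxTK2
set_option linter.unusedSectionVars false

variable {R : Type*} [CommRing R] [IsDomain R] [IsDedekindDomain R]
  {O : Subring R} {H : Submonoid (FractionRing R)}

local notation "θ" => algebraMap R (FractionRing R)

lemma tkAux_theta_inj : Function.Injective (θ) := IsFractionRing.injective R (FractionRing R)

lemma tkAux_theta_ne_zero {x : R} (hx : x ≠ 0) : (θ) x ≠ 0 := by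
  intro h
  exact hx (tkAux_theta_inj (by rw [h, map_zero]))

/-- Root closedness: if a positive power of `θ x` lies in `H`, then so does `θ x`. -/
lemma tkAux_memH_of_pow (hH : IsTKOvermonoid O H)
    (hfrac : ∀ r : R, ∃ a b : ↥O, (b : R) ≠ 0 ∧ (b : R) * r = (a : R))
    {x : R} (hx : x ≠ 0) {n : ℕ} (hn : 0 < n) (h : (θ) (x ^ n) ∈ H) : (θ) x ∈ H := by
  obtain ⟨a, b, hb0, hba⟩ := hfrac x
  have ha0 : (a : R) ≠ 0 := by
    rw [← hba]; exact mul_ne_zero hb0 hx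
  set A : ↥H := ⟨(θ) (a : R), hH.incl _ a.2 ha0⟩ with hA
  set B : ↥H := ⟨(θ) (b : R), hH.incl _ b.2 hb0⟩ with hB
  set X : ↥H := ⟨(θ) (x ^ n), h⟩ with hX
  have hab : (θ) (a : R) = (θ) (b : R) * (θ) x := by rw [← map_mul, hba]
  have key : A ^ n = X * B ^ n := by
    apply Subtype.ext
    simp only [SubmonoidClass.coe_pow, Submonoid.coe_mul, hA, hB, hX]
    rw [hab, map_pow, mul_pow, mul_comm]
  obtain ⟨ι, d, hd⟩ := hH.krull
  have hdvd : d B ∣ d A := by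
    have hdk : (d A) ^ n = d X * (d B) ^ n := by
      rw [← map_pow, ← map_pow, ← map_mul, key]
    set α := Multiplicative.toAdd (d A) with hα
    set β := Multiplicative.toAdd (d B) with hβ
    set χ := Multiplicative.toAdd (d X) with hχ
    have hadd : n • α = χ + n • β := by
      have := congrArg Multiplicative.toAdd hdk
      simpa [toAdd_pow] using this
    have hle : β ≤ α := by
      refine Finsupp.le_def.mpr fun i => ?_
      have h0 := congrArg (fun g => g i) hadd
      simp only [Finsupp.smul_apply, Finsupp.add_apply, smul_eq_mul] at h0
      have h2 : n * β i ≤ n * α i := h0 ▸ Nat.le_add_left _ _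
      exact Nat.le_of_mul_le_mul_left h2 hn
    obtain ⟨c, hc⟩ := le_iff_exists_add.mp hle
    refine ⟨Multiplicative.ofAdd c, ?_⟩
    have : Multiplicative.toAdd (d B * Multiplicative.ofAdd c) = Multiplicative.toAdd (d A) := by
      simpa using hc.symm
    exact (Multiplicative.toAdd.injective this).symm
  obtain ⟨C, hC⟩ := hd B A hdvd
  have hvals : (θ) (a : R) = (θ) (b : R) * (C : FractionRing R) := congrArg Subtype.val hC
  have : (C : FractionRing R) = (θ) x := by
    apply mul_left_cancel₀ (tkAux_theta_ne_zero hb0)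
    rw [← hvals, hab]
  rw [← this]
  exact C.2

/-- Elements coprime to the conductor map into `H`. -/
lemma tkAux_memH_coprime (hH : IsTKOvermonoid O H)
    (hfrac : ∀ r : R, ∃ a b : ↥O, (b : R) ≠ 0 ∧ (b : R) * r = (a : R))
    (hfin : Finite (R ⧸ O.conductor))
    {x : R} (hx : x ≠ 0) (hcop : Ideal.span {x} ⊔ O.conductor = ⊤) : (θ) x ∈ H := by
  have hn₀ : 0 < Nat.card (R ⧸ O.conductor)ˣ := by
    have : Finite (R ⧸ O.conductor) := hfin
    exact Nat.card_pos
  exact tkAux_memH_of_pow hH hfrac hx hn₀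
    (hH.incl _ (tkAux_pow_card_mem hfin hcop) (pow_ne_zero _ hx))

/-- Images of units of `R` are `H`-units. -/
lemma tkAux_unit_isGH (hH : IsTKOvermonoid O H)
    (hfrac : ∀ r : R, ∃ a b : ↥O, (b : R) ≠ 0 ∧ (b : R) * r = (a : R))
    (hfin : Finite (R ⧸ O.conductor))
    {u : R} (hu : IsUnit u) : IsGH H ((θ) u) := by
  obtain ⟨v, hv⟩ := hu.exists_right_inv
  have hu0 : u ≠ 0 := by rintro rfl; simp at hv
  have hv0 : v ≠ 0 := by rintro rfl; simp at hv
  have hcu : Ideal.span {u} ⊔ O.conductor = ⊤ := by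
    rw [Ideal.span_singleton_eq_top.mpr hu]; exact top_sup_eq _
  have hcv : Ideal.span {v} ⊔ O.conductor = ⊤ := by
    rw [Ideal.span_singleton_eq_top.mpr (IsUnit.of_mul_eq_one u (by rw [mul_comm]; exact hv))]
    exact top_sup_eq _
  refine ⟨tkAux_memH_coprime hH hfrac hfin hu0 hcu, (θ) v,
    tkAux_memH_coprime hH hfrac hfin hv0 hcv, ?_⟩
  rw [← map_mul, hv, map_one]

/-- If `θ x` is an `H`-unit and `x` is coprime to the conductor, then `x` is a unit of `R`. -/
lemma tkAux_isUnit_of_isGH (hH : IsTKOvermonoid O H)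
    (hfin : Finite (R ⧸ O.conductor))
    {x : R} (hx : x ≠ 0) (hcop : Ideal.span {x} ⊔ O.conductor = ⊤)
    (hg : IsGH H ((θ) x)) : IsUnit x := by
  set n₀ := Nat.card (R ⧸ O.conductor)ˣ with hn₀def
  have hn₀ : 0 < n₀ := by
    have : Finite (R ⧸ O.conductor) := hfin
    exact Nat.card_pos
  have hmem : x ^ n₀ ∈ O := tkAux_pow_card_mem hfin hcop
  have hgpow : IsGH H ((θ) (x ^ n₀)) := by rw [map_pow]; exact hg.pow n₀
  obtain ⟨_, y, hyH, hxy⟩ := hgpow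
  obtain ⟨b, hbO, hb⟩ := hH.t1' (x ^ n₀) hmem (pow_ne_zero _ hx) ⟨y, hyH, hxy⟩
  refine IsUnit.of_mul_eq_one (x ^ (n₀ - 1) * b) ?_
  calc x * (x ^ (n₀ - 1) * b) = x ^ (1 + (n₀ - 1)) * b := by rw [pow_add, pow_one]; ring
  _ = 1 := by rw [show 1 + (n₀ - 1) = n₀ by omega]; exact hb

end AuxTK2

section AuxTK3
set_option linter.unusedSectionVars false
set_option maxHeartbeats 1000000

variable {R : Type*} [CommRing R] [IsDomain R] [IsDedekindDomain R]
  {O : Subring R} {H : Submonoid (FractionRing R)}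

local notation "θ" => algebraMap R (FractionRing R)

/-- Lifting of `H`-factorizations to `O`-factorizations, list version. -/
lemma tkAux_split_full (hH : IsTKOvermonoid O H) :
    ∀ (L : List (FractionRing R)), (∀ x ∈ L, x ∈ H) → ∀ g₀, IsGH H g₀ →
    ∀ a : R, a ∈ O → a ≠ 0 → (θ) a = L.prod * g₀ →
    ∃ (M : List R) (e : R), (e ∈ O ∧ IsUnit e) ∧ a = M.prod * e ∧
      List.Forall₂ (fun v x => v ∈ O ∧ v ≠ 0 ∧ ∃ g, IsGH H g ∧ (θ) v = x * g) M L := by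
  intro L
  induction L with
  | nil =>
    intro _ g₀ hg₀ a haO ha0 heq
    simp only [List.prod_nil, one_mul] at heq
    have hga : IsGH H ((θ) a) := heq ▸ hg₀
    obtain ⟨_, y, hyH, hxy⟩ := hga
    obtain ⟨b, hbO, hb⟩ := hH.t1' a haO ha0 ⟨y, hyH, hxy⟩
    exact ⟨[], a, ⟨haO, IsUnit.of_mul_eq_one b hb⟩, by simp, List.Forall₂.nil⟩
  | cons x L ih =>
    intro hL g₀ hg₀ a haO ha0 heq
    have hxH : x ∈ H := hL x List.mem_cons_self
    have hLH : ∀ y ∈ L, y ∈ H := fun y hy => hL y (List.mem_cons_of_mem _ hy)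
    have hyH : L.prod * g₀ ∈ H := H.mul_mem (list_prod_mem hLH) hg₀.1
    have heq' : (θ) a = x * (L.prod * g₀) := by
      rw [heq, List.prod_cons]; ring
    obtain ⟨v, w, hvO, hwO, hvw, hAv, hAw⟩ := hH.t2 a haO ha0 x hxH _ hyH heq'
    obtain ⟨ε, hε, hθv⟩ := tkAux_assocIn_isGH hAv
    obtain ⟨ε', hε', hθw⟩ := tkAux_assocIn_isGH hAw
    have hv0 : v ≠ 0 := fun h => ha0 (by rw [hvw, h, zero_mul])
    have hw0 : w ≠ 0 := fun h => ha0 (by rw [hvw, h, mul_zero])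
    have hθw' : (θ) w = L.prod * (g₀ * ε') := by rw [hθw]; ring
    obtain ⟨M, e, he, hwe, hF⟩ := ih hLH (g₀ * ε') (hg₀.mul hε') w hwO hw0 hθw'
    refine ⟨v :: M, e, he, ?_, List.Forall₂.cons ⟨hvO, hv0, ε, hε, hθv⟩ hF⟩
    rw [List.prod_cons, hvw, hwe]; ring

/-- For a prime `P` coprime to the conductor whose class has order dividing 2 and is
nontrivial, some generator of `P ^ 2` lies in `O`. -/
lemma tkAux_genP2 (hH : IsTKOvermonoid O H)
    (hfrac : ∀ r : R, ∃ a b : ↥O, (b : R) ≠ 0 ∧ (b : R) * r = (a : R))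
    (hfin : Finite (R ⧸ O.conductor))
    {P : Ideal R} (hPp : P.IsPrime) (hP0 : P ≠ ⊥)
    (hnp : ¬ Submodule.IsPrincipal P)
    (hPsq : Submodule.IsPrincipal (P ^ 2))
    (hcop : P ⊔ O.conductor = ⊤) :
    ∃ a : R, a ∈ O ∧ a ≠ 0 ∧ Ideal.span {a} = P ^ 2 := by
  have hPprime : Prime P := Ideal.prime_of_isPrime hP0 hPp
  have hP0' : P ≠ 0 := hP0
  obtain ⟨γ, hγ⟩ := hPsq
  have hP2ne : P ^ 2 ≠ 0 := pow_ne_zero _ hP0'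
  have hγ0 : γ ≠ 0 := by
    rintro rfl
    rw [Submodule.span_zero_singleton] at hγ
    exact hP2ne hγ
  have hγspan : Ideal.span {γ} = P ^ 2 := hγ.symm
  have hcopγ : Ideal.span {γ} ⊔ O.conductor = ⊤ := by
    rw [hγspan, ← Ideal.isCoprime_iff_sup_eq]
    exact (Ideal.isCoprime_iff_sup_eq.mpr hcop).pow_left
  have hγH : (θ) γ ∈ H := tkAux_memH_coprime hH hfrac hfin hγ0 hcopγ
  set n₀ := Nat.card (R ⧸ O.conductor)ˣ with hn₀def
  have hn₀ : 0 < n₀ := by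
    have : Finite (R ⧸ O.conductor) := hfin
    exact Nat.card_pos
  set m := 2 * n₀ with hmdef
  have hm1 : 1 ≤ m := by omega
  have hγm : γ ^ m ∈ O := by
    rw [hmdef, mul_comm, pow_mul]
    exact O.pow_mem (tkAux_pow_card_mem hfin hcopγ) 2
  have hγm0 : γ ^ m ≠ 0 := pow_ne_zero _ hγ0
  have heq : (θ) (γ ^ m) = (θ) γ * ((θ) γ) ^ (m - 1) := by
    rw [map_pow, ← pow_succ']
    congr 1
    omega
  obtain ⟨v, w, hvO, hwO, hvw, hAv, hAw⟩ :=
    hH.t2 (γ ^ m) hγm hγm0 ((θ) γ) hγH (((θ) γ) ^ (m - 1)) (H.pow_mem hγH _) heq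
  obtain ⟨ε, hε, hθv⟩ := tkAux_assocIn_isGH hAv
  have hv0 : v ≠ 0 := fun h => hγm0 (by rw [hvw, h, zero_mul])
  -- span v = P ^ i for some i ≤ 2m
  have hvdvd : Ideal.span {v} ∣ P ^ (2 * m) := by
    have : Ideal.span {γ ^ m} ≤ Ideal.span {v} :=
      Ideal.span_singleton_le_span_singleton.mpr ⟨w, hvw⟩
    have h2 : Ideal.span {v} ∣ Ideal.span {γ ^ m} := Ideal.dvd_iff_le.mpr this
    rwa [← Ideal.span_singleton_pow, hγspan, ← pow_mul] at h2
  obtain ⟨i, hi, hassoc⟩ := (dvd_prime_pow hPprime _).mp hvdvd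
  have hspanv : Ideal.span {v} = P ^ i := tkAux_assoc_ideal_eq hassoc
  -- i = 0 is impossible
  rcases Nat.eq_zero_or_pos i with hi0 | hipos
  · exfalso
    have hvunit : IsUnit v := by
      rw [← Ideal.span_singleton_eq_top]
      rw [hspanv, hi0, pow_zero, Ideal.one_eq_top]
    obtain ⟨εi, hεi, hεεi⟩ := hε.inv
    have hγG : IsGH H ((θ) γ) := by
      have : (θ) γ = (θ) v * εi := by
        rw [hθv, mul_assoc, hεεi, mul_one]
      rw [this]
      exact (tkAux_unit_isGH hH hfrac hfin hvunit).mul hεi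
    have : IsUnit γ := tkAux_isUnit_of_isGH hH hfin hγ0 hcopγ hγG
    have : Ideal.span {γ} = ⊤ := Ideal.span_singleton_eq_top.mpr this
    rw [hγspan] at this
    have : (⊤ : Ideal R) ≤ P := by
      rw [← this, pow_two]; exact Ideal.mul_le_right
    exact hPp.ne_top (top_le_iff.mp this)
  -- i = 1 is impossible
  rcases Nat.lt_or_ge i 2 with hi2 | hi2
  · exfalso
    have hi1 : i = 1 := by omega
    refine hnp ⟨v, ?_⟩
    rw [hi1, pow_one] at hspanv
    exact hspanv.symm
  -- i ≥ 2 : show i = 2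
  have hvle : Ideal.span {v} ≤ Ideal.span {γ} := by
    rw [hspanv, hγspan]
    exact Ideal.pow_le_pow_right hi2
  obtain ⟨r, hr⟩ := Ideal.span_singleton_le_span_singleton.mp hvle
  have hspanr : Ideal.span {r} = P ^ (i - 2) := by
    have h1 : Ideal.span {γ} * Ideal.span {r} = Ideal.span {v} := by
      rw [Ideal.span_singleton_mul_span_singleton, ← hr]
    have h2 : Ideal.span {γ} * (P ^ (i - 2)) = Ideal.span {v} := by
      rw [hγspan, hspanv, ← pow_add]
      congr 1
      omega
    have hne : Ideal.span {γ} ≠ 0 := by rw [hγspan]; exact hP2ne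
    exact mul_left_cancel₀ hne (h1.trans h2.symm)
  have hr0 : r ≠ 0 := by
    rintro rfl
    rw [mul_zero] at hr
    exact hv0 hr
  have hθr : (θ) r = ε := by
    apply mul_left_cancel₀ (tkAux_theta_ne_zero hγ0)
    rw [← map_mul, ← hr, hθv]
  have hrG : IsGH H ((θ) r) := hθr ▸ hε
  have hcopr : Ideal.span {r} ⊔ O.conductor = ⊤ := by
    rw [hspanr, ← Ideal.isCoprime_iff_sup_eq]
    exact (Ideal.isCoprime_iff_sup_eq.mpr hcop).pow_left
  have hrunit : IsUnit r := tkAux_isUnit_of_isGH hH hfin hr0 hcopr hrG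
  have hrtop : Ideal.span {r} = ⊤ := Ideal.span_singleton_eq_top.mpr hrunit
  have hi2' : i = 2 := by
    by_contra hne2
    have hgt : 2 < i := by omega
    have : (⊤ : Ideal R) ≤ P := by
      calc (⊤ : Ideal R) = P ^ (i - 2) := by rw [← hspanr, hrtop]
      _ ≤ P ^ 1 := Ideal.pow_le_pow_right (by omega)
      _ = P := pow_one P
    exact hPp.ne_top (top_le_iff.mp this)
  exact ⟨v, hvO, hv0, by rw [hspanv, hi2']⟩

end AuxTK3

section AuxTK4
set_option linter.unusedSectionVars false
set_option maxHeartbeats 1000000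

lemma tkAux_forall₂_mem_left {α β : Type*} {r : α → β → Prop} :
    ∀ {l₁ : List α} {l₂ : List β}, List.Forall₂ r l₁ l₂ → ∀ a ∈ l₁, ∃ b ∈ l₂, r a b := by
  intro l₁ l₂ h
  induction h with
  | nil => intro a ha; simp at ha
  | cons hab _ ih =>
    intro a ha
    rcases List.mem_cons.mp ha with rfl | ha
    · exact ⟨_, List.mem_cons_self, hab⟩
    · obtain ⟨b, hb, hrb⟩ := ih a ha
      exact ⟨b, List.mem_cons_of_mem _ hb, hrb⟩

variable {R : Type*} [CommRing R] [IsDomain R] [IsDedekindDomain R]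
  {O : Subring R} {H : Submonoid (FractionRing R)}

local notation "θ" => algebraMap R (FractionRing R)

/-- The key counting contradiction: if `t·u` (a generator of `Pa·Pb·Pc` up to a unit) is
`H`-associated to an element of `O` generating `Pa ^ 2`, we get factorizations of
incompatible lengths. -/
lemma tkAux_contra (hH : IsTKOvermonoid O H)
    (hfrac : ∀ r : R, ∃ a b : ↥O, (b : R) ≠ 0 ∧ (b : R) * r = (a : R))
    (hfin : Finite (R ⧸ O.conductor))
    {Pa Pb Pc : Ideal R}
    (hPaP : Pa.IsPrime) (hPa0 : Pa ≠ ⊥)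
    (hnpa : ¬ Submodule.IsPrincipal Pa)
    (hPbt : Pb ≠ ⊤) (hPct : Pc ≠ ⊤)
    (hcopa : Pa ⊔ O.conductor = ⊤) (hcopb : Pb ⊔ O.conductor = ⊤)
    (hcopc : Pc ⊔ O.conductor = ⊤)
    {aa ab ac : R}
    (haaO : aa ∈ O) (haa0 : aa ≠ 0) (hsa : Ideal.span {aa} = Pa ^ 2)
    (habO : ab ∈ O) (hab0 : ab ≠ 0) (hsb : Ideal.span {ab} = Pb ^ 2)
    (hacO : ac ∈ O) (hac0 : ac ≠ 0) (hsc : Ideal.span {ac} = Pc ^ 2)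
    {t : R} (ht0 : t ≠ 0) (hst : Ideal.span {t} = Pa * Pb * Pc)
    {u : R} (hu : IsUnit u) {δ : FractionRing R} (hδ : IsGH H δ)
    (heq : (θ) (t * u) = (θ) aa * δ) : False := by
  have hPaprime : Prime Pa := Ideal.prime_of_isPrime hPa0 hPaP
  set n₀ := Nat.card (R ⧸ O.conductor)ˣ with hn₀def
  have hn₀ : 0 < n₀ := by
    have : Finite (R ⧸ O.conductor) := hfin
    exact Nat.card_pos
  set N := 2 * n₀ with hNdef
  set z := aa ^ n₀ * (ab ^ n₀ * ac ^ n₀) with hzdef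
  have hzO : z ∈ O := O.mul_mem (O.pow_mem haaO _) (O.mul_mem (O.pow_mem habO _) (O.pow_mem hacO _))
  have hz0 : z ≠ 0 :=
    mul_ne_zero (pow_ne_zero _ haa0) (mul_ne_zero (pow_ne_zero _ hab0) (pow_ne_zero _ hac0))
  set c₂ := aa ^ N with hc₂def
  have hc₂O : c₂ ∈ O := O.pow_mem haaO _
  have hc₂0 : c₂ ≠ 0 := pow_ne_zero _ haa0
  have hspanz : Ideal.span {z} = (Pa * Pb * Pc) ^ N := by
    rw [hzdef, ← Ideal.span_singleton_mul_span_singleton,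
      ← Ideal.span_singleton_mul_span_singleton, ← Ideal.span_singleton_pow,
      ← Ideal.span_singleton_pow, ← Ideal.span_singleton_pow, hsa, hsb, hsc, hNdef]
    ring
  have hsptu : Ideal.span {t * u} = Pa * Pb * Pc := by
    have hassoc : Associated (t * u) t := by
      refine Associated.symm ⟨hu.unit, ?_⟩
      rw [IsUnit.unit_spec]
    rw [Ideal.span_singleton_eq_span_singleton.mpr hassoc, hst]
  have hassoc2 : Associated ((t * u) ^ N) z := by
    rw [← Ideal.span_singleton_eq_span_singleton, ← Ideal.span_singleton_pow, hsptu, hspanz]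
  obtain ⟨u₄, hu₄⟩ := hassoc2
  have hgstar : IsGH H (δ ^ N * (θ) (u₄ : R)) :=
    (hδ.pow N).mul (tkAux_unit_isGH hH hfrac hfin u₄.isUnit)
  set gstar := δ ^ N * (θ) (u₄ : R) with hgstardef
  have hθz : (θ) z = (θ) c₂ * gstar := by
    rw [← hu₄, map_mul, map_pow, heq, mul_pow, hc₂def, map_pow, hgstardef]
    ring
  obtain ⟨g', hg', hgg'⟩ := hgstar.inv
  set L := List.replicate n₀ ((θ) aa) ++ (List.replicate n₀ ((θ) ab) ++ List.replicate n₀ ((θ) ac))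
    with hLdef
  have hLprod : L.prod = (θ) z := by
    rw [hLdef]
    simp only [List.prod_append, List.prod_replicate]
    rw [hzdef, map_mul, map_mul, map_pow, map_pow, map_pow]
  have hLH : ∀ x ∈ L, x ∈ H := by
    intro x hx
    rw [hLdef] at hx
    rcases List.mem_append.mp hx with hx | hx
    · rw [List.eq_of_mem_replicate hx]; exact hH.incl _ haaO haa0
    rcases List.mem_append.mp hx with hx | hx
    · rw [List.eq_of_mem_replicate hx]; exact hH.incl _ habO hab0
    · rw [List.eq_of_mem_replicate hx]; exact hH.incl _ hacO hac0
  have hθc₂ : (θ) c₂ = L.prod * g' := by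
    rw [hLprod, hθz, mul_assoc, hgg', mul_one]
  obtain ⟨M, e, ⟨heO, heu⟩, hce, hF⟩ :=
    tkAux_split_full hH L hLH g' hg' c₂ hc₂O hc₂0 hθc₂
  -- each factor has span a power `Pa ^ i` with `i ≥ 2`
  have hkey : ∀ v ∈ M, Pa ^ 2 ∣ Ideal.span {v} := by
    intro v hv
    obtain ⟨x, hxL, hvO, hv0, g, hg, hθvx⟩ := tkAux_forall₂_mem_left hF v hv
    have hNG : ¬ IsGH H ((θ) v) := by
      intro hvG
      obtain ⟨gi, hgi, hggi⟩ := hg.inv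
      have hxeq : x = (θ) v * gi := by rw [hθvx, mul_assoc, hggi, mul_one]
      have hxG : IsGH H x := by rw [hxeq]; exact hvG.mul hgi
      have hP2top : ∀ (aq : R) (Pq : Ideal R), aq ≠ 0 → Ideal.span {aq} = Pq ^ 2 →
          Pq ⊔ O.conductor = ⊤ → IsGH H ((θ) aq) → Pq = ⊤ := by
        intro aq Pq haq0 hsq hcopq hGq
        have hcopaq : Ideal.span {aq} ⊔ O.conductor = ⊤ := by
          rw [hsq, ← Ideal.isCoprime_iff_sup_eq]
          exact (Ideal.isCoprime_iff_sup_eq.mpr hcopq).pow_left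
        have := tkAux_isUnit_of_isGH hH hfin haq0 hcopaq hGq
        have htop : Ideal.span {aq} = ⊤ := Ideal.span_singleton_eq_top.mpr this
        rw [hsq] at htop
        have : (⊤ : Ideal R) ≤ Pq := by
          rw [← htop, pow_two]; exact Ideal.mul_le_right
        exact top_le_iff.mp this
      rw [hLdef] at hxL
      rcases List.mem_append.mp hxL with hx | hx
      · rw [List.eq_of_mem_replicate hx] at hxG
        exact hPaP.ne_top (hP2top aa Pa haa0 hsa hcopa hxG)
      rcases List.mem_append.mp hx with hx | hx
      · rw [List.eq_of_mem_replicate hx] at hxG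
        exact hPbt (hP2top ab Pb hab0 hsb hcopb hxG)
      · rw [List.eq_of_mem_replicate hx] at hxG
        exact hPct (hP2top ac Pc hac0 hsc hcopc hxG)
    have hvdvdc : v ∣ c₂ := dvd_trans (List.dvd_prod hv) ⟨e, hce⟩
    have hspanc₂ : Ideal.span {c₂} = Pa ^ (2 * N) := by
      rw [hc₂def, ← Ideal.span_singleton_pow, hsa, ← pow_mul]
    have hvdvd : Ideal.span {v} ∣ Pa ^ (2 * N) := by
      rw [← hspanc₂]
      exact Ideal.dvd_iff_le.mpr (Ideal.span_singleton_le_span_singleton.mpr hvdvdc)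
    obtain ⟨i, hi, hassoc⟩ := (dvd_prime_pow hPaprime _).mp hvdvd
    have hspanv : Ideal.span {v} = Pa ^ i := tkAux_assoc_ideal_eq hassoc
    rcases Nat.eq_zero_or_pos i with hi0 | hipos
    · exfalso
      apply hNG
      apply tkAux_unit_isGH hH hfrac hfin
      rw [← Ideal.span_singleton_eq_top, hspanv, hi0, pow_zero, Ideal.one_eq_top]
    rcases Nat.lt_or_ge i 2 with hi2 | hi2
    · exfalso
      have hi1 : i = 1 := by omega
      refine hnpa ⟨v, ?_⟩
      rw [hi1, pow_one] at hspanv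
      exact hspanv.symm
    · rw [hspanv]
      exact pow_dvd_pow _ hi2
  -- counting
  have hlenM : M.length = 3 * n₀ := by
    rw [hF.length_eq, hLdef]
    simp [List.length_append, List.length_replicate]
    ring
  have hdvd1 : (Pa ^ 2) ^ M.length ∣ Ideal.span {M.prod} := by
    rw [tkAux_span_list_prod]
    have hlen : (M.map fun v => Ideal.span {v}).length = M.length := List.length_map _
    rw [← hlen]
    apply tkAux_pow_dvd_list
    intro I hI
    obtain ⟨v, hv, rfl⟩ := List.mem_map.mp hI
    exact hkey v hv
  have hspane : Ideal.span {e} = ⊤ := Ideal.span_singleton_eq_top.mpr heu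
  have hspanc₂' : Ideal.span {c₂} = Ideal.span {M.prod} := by
    rw [hce, ← Ideal.span_singleton_mul_span_singleton, hspane, Ideal.mul_top]
  have hspanc₂ : Ideal.span {c₂} = Pa ^ (2 * N) := by
    rw [hc₂def, ← Ideal.span_singleton_pow, hsa, ← pow_mul]
  have hfinal : Pa ^ (6 * n₀) ∣ Pa ^ (4 * n₀) := by
    have h1 : (Pa ^ 2) ^ M.length = Pa ^ (6 * n₀) := by
      rw [hlenM, ← pow_mul]
      congr 1
      ring
    have h2 : Pa ^ (2 * N) = Pa ^ (4 * n₀) := by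
      congr 1
      rw [hNdef]; ring
    rw [← h1, ← h2, hspanc₂.symm.trans hspanc₂']
    exact hdvd1
  obtain ⟨X, hX⟩ := hfinal
  have hPane : Pa ≠ (0 : Ideal R) := hPa0
  have hcancel : (1 : Ideal R) = Pa ^ (2 * n₀) * X := by
    apply mul_left_cancel₀ (pow_ne_zero (4 * n₀) hPane)
    calc Pa ^ (4 * n₀) * 1 = Pa ^ (4 * n₀) := mul_one _
    _ = Pa ^ (6 * n₀) * X := hX
    _ = Pa ^ (4 * n₀) * (Pa ^ (2 * n₀) * X) := by
        rw [← mul_assoc, ← pow_add]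
        congr 2
        omega
  have : (⊤ : Ideal R) ≤ Pa := by
    calc (⊤ : Ideal R) = Pa ^ (2 * n₀) * X := by rw [← Ideal.one_eq_top, hcancel]
    _ ≤ Pa ^ (2 * n₀) := Ideal.mul_le_left
    _ ≤ Pa := Ideal.pow_le_self (by omega)
  exact hPaP.ne_top (top_le_iff.mp this)

end AuxTK4

set_option maxHeartbeats 1600000 in
set_option synthInstance.maxHeartbeats 1000000 in
theorem order_two_classes_product_in_order
    {R : Type*} [CommRing R] [IsDomain R] [IsDedekindDomain R]
    (O : Subring R) (hne : O ≠ ⊤) (hfg : Module.Finite ↥O R)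
    (hfrac : ∀ r : R, ∃ a b : ↥O, (b : R) ≠ 0 ∧ (b : R) * r = (a : R))
    (htor : ∀ c : ClassGroup R, ∃ n : ℕ, 0 < n ∧ c ^ n = 1)
    (hfin : Finite (R ⧸ O.conductor))
    (hcls : ∀ c : ClassGroup R, ∃ (P : Ideal R) (hP : P ∈ (Ideal R)⁰),
      P.IsPrime ∧ ¬ O.conductor ≤ P ∧ ClassGroup.mk0 ⟨P, hP⟩ = c)
    (H : Submonoid (FractionRing R)) (hH : IsTKOvermonoid O H)
    (hcard : Nat.card (ClassGroup R) ≠ 2)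
    (P₁ P₂ P₃ : Ideal R)
    (h₁ : P₁ ∈ (Ideal R)⁰) (h₂ : P₂ ∈ (Ideal R)⁰) (h₃ : P₃ ∈ (Ideal R)⁰)
    (hp₁ : P₁.IsPrime) (hp₂ : P₂.IsPrime) (hp₃ : P₃.IsPrime)
    (hc₁ : ¬ O.conductor ≤ P₁) (hc₂ : ¬ O.conductor ≤ P₂) (hc₃ : ¬ O.conductor ≤ P₃)
    (ho₁ : orderOf (ClassGroup.mk0 ⟨P₁, h₁⟩) = 2)
    (ho₂ : orderOf (ClassGroup.mk0 ⟨P₂, h₂⟩) = 2)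
    (hneq : ClassGroup.mk0 ⟨P₁, h₁⟩ ≠ ClassGroup.mk0 ⟨P₂, h₂⟩)
    (hcl : ClassGroup.mk0 ⟨P₃, h₃⟩ = ClassGroup.mk0 ⟨P₁, h₁⟩ * ClassGroup.mk0 ⟨P₂, h₂⟩) :
    ∃ b ∈ O, Ideal.span {b} = P₁ * P₂ * P₃ := by
  classical
  set θ := algebraMap R (FractionRing R) with hθdef
  set f := O.conductor with hfdef
  set g₁ := ClassGroup.mk0 ⟨P₁, h₁⟩ with hg₁def
  set g₂ := ClassGroup.mk0 ⟨P₂, h₂⟩ with hg₂def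
  -- nonzero primes
  have hne_bot : ∀ (P : Ideal R), P ∈ (Ideal R)⁰ → P ≠ ⊥ := by
    intro P hP hbot
    have h0 : (⊤ : Ideal R) * P = 0 := by rw [hbot, Ideal.zero_eq_bot, Ideal.mul_bot]
    have htop := (mem_nonZeroDivisors_iff.mp hP).2 ⊤ h0
    have h1 : (1 : R) ∈ (⊤ : Ideal R) := trivial
    rw [htop, Ideal.zero_eq_bot, Ideal.mem_bot] at h1
    exact one_ne_zero h1
  have hP₁0 := hne_bot P₁ h₁
  have hP₂0 := hne_bot P₂ h₂
  have hP₃0 := hne_bot P₃ h₃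
  -- coprimality with the conductor
  have hmax : ∀ (P : Ideal R), P.IsPrime → P ≠ ⊥ → ¬ f ≤ P → P ⊔ f = ⊤ := by
    intro P hPp hP0 hc
    by_contra hnetop
    have hPm : P.IsMaximal := Ideal.IsPrime.isMaximal hPp hP0
    have heqP := hPm.eq_of_le hnetop le_sup_left
    exact hc (by rw [heqP]; exact le_sup_right)
  have hcop₁ : P₁ ⊔ f = ⊤ := hmax P₁ hp₁ hP₁0 hc₁
  have hcop₂ : P₂ ⊔ f = ⊤ := hmax P₂ hp₂ hP₂0 hc₂
  have hcop₃ : P₃ ⊔ f = ⊤ := hmax P₃ hp₃ hP₃0 hc₃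
  -- class group facts
  have hg₁sq : g₁ ^ 2 = 1 := by rw [← ho₁]; exact pow_orderOf_eq_one _
  have hg₂sq : g₂ ^ 2 = 1 := by rw [← ho₂]; exact pow_orderOf_eq_one _
  have hg₁ne : g₁ ≠ 1 := by
    intro h; rw [h, orderOf_one] at ho₁; omega
  have hg₂ne : g₂ ≠ 1 := by
    intro h; rw [h, orderOf_one] at ho₂; omega
  have hg₃ne : ClassGroup.mk0 ⟨P₃, h₃⟩ ≠ 1 := by
    rw [hcl]
    intro h
    apply hneq
    have h2 : g₂ = g₁⁻¹ := by rwa [eq_inv_iff_mul_eq_one, mul_comm]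
    have h3 : g₁⁻¹ = g₁ := by
      rw [inv_eq_iff_mul_eq_one, ← pow_two]; exact hg₁sq
    rw [h2, h3]
  have hg₃sq : ClassGroup.mk0 ⟨P₃, h₃⟩ ^ 2 = 1 := by
    rw [hcl, mul_pow, hg₁sq, hg₂sq, one_mul]
  -- principal generator extraction
  have hprin : ∀ (I : Ideal R) (hI : I ∈ (Ideal R)⁰), ClassGroup.mk0 ⟨I, hI⟩ = 1 →
      ∃ s : R, s ≠ 0 ∧ Ideal.span {s} = I := by
    intro I hI h1
    obtain ⟨s, hs⟩ := ((ClassGroup.mk0_eq_one_iff hI).mp h1).principal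
    refine ⟨s, ?_, hs.symm⟩
    intro h0
    rw [h0, Submodule.span_zero_singleton] at hs
    exact hne_bot I hI hs
  -- the generator t of P₁P₂P₃
  have hT : P₁ * P₂ * P₃ ∈ (Ideal R)⁰ := mul_mem (mul_mem h₁ h₂) h₃
  have hmkT : ClassGroup.mk0 ⟨P₁ * P₂ * P₃, hT⟩ = 1 := by
    have hsub : (⟨P₁ * P₂ * P₃, hT⟩ : (Ideal R)⁰) = ⟨P₁, h₁⟩ * ⟨P₂, h₂⟩ * ⟨P₃, h₃⟩ := rfl
    have hmm : ClassGroup.mk0 (⟨P₁, h₁⟩ * ⟨P₂, h₂⟩ * ⟨P₃, h₃⟩ : (Ideal R)⁰)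
        = g₁ * g₂ * (g₁ * g₂) := by
      rw [map_mul, map_mul, hcl, hg₁def, hg₂def]
    rw [hsub, hmm]
    calc g₁ * g₂ * (g₁ * g₂) = g₁ * g₁ * (g₂ * g₂) := mul_mul_mul_comm g₁ g₂ g₁ g₂
    _ = 1 := by rw [← pow_two, ← pow_two, hg₁sq, hg₂sq, one_mul]
  obtain ⟨t, ht0, hst⟩ := hprin _ hT hmkT
  have hcopT : Ideal.span {t} ⊔ f = ⊤ := by
    rw [hst, ← Ideal.isCoprime_iff_sup_eq]
    exact ((Ideal.isCoprime_iff_sup_eq.mpr hcop₁).mul_left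
      (Ideal.isCoprime_iff_sup_eq.mpr hcop₂)).mul_left
      (Ideal.isCoprime_iff_sup_eq.mpr hcop₃)
  -- generators of Pᵢ² in O
  have hsq_prin : ∀ (P : Ideal R) (hP : P ∈ (Ideal R)⁰), ClassGroup.mk0 ⟨P, hP⟩ ^ 2 = 1 →
      Submodule.IsPrincipal (P ^ 2) := by
    intro P hP hsq
    have hP2 : P ^ 2 ∈ (Ideal R)⁰ := pow_mem hP 2
    have hsub : (⟨P ^ 2, hP2⟩ : (Ideal R)⁰) = ⟨P, hP⟩ ^ 2 := rfl
    have : ClassGroup.mk0 ⟨P ^ 2, hP2⟩ = 1 := by rw [hsub, map_pow, hsq]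
    exact (ClassGroup.mk0_eq_one_iff hP2).mp this
  have hnp₁ : ¬ Submodule.IsPrincipal P₁ := by
    intro h; exact hg₁ne ((ClassGroup.mk0_eq_one_iff h₁).mpr h)
  have hnp₂ : ¬ Submodule.IsPrincipal P₂ := by
    intro h; exact hg₂ne ((ClassGroup.mk0_eq_one_iff h₂).mpr h)
  have hnp₃ : ¬ Submodule.IsPrincipal P₃ := by
    intro h; exact hg₃ne ((ClassGroup.mk0_eq_one_iff h₃).mpr h)
  obtain ⟨a₁, ha₁O, ha₁0, hs₁⟩ :=
    tkAux_genP2 hH hfrac hfin hp₁ hP₁0 hnp₁ (hsq_prin P₁ h₁ hg₁sq) hcop₁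
  obtain ⟨a₂, ha₂O, ha₂0, hs₂⟩ :=
    tkAux_genP2 hH hfrac hfin hp₂ hP₂0 hnp₂ (hsq_prin P₂ h₂ hg₂sq) hcop₂
  obtain ⟨a₃, ha₃O, ha₃0, hs₃⟩ :=
    tkAux_genP2 hH hfrac hfin hp₃ hP₃0 hnp₃ (hsq_prin P₃ h₃ hg₃sq) hcop₃
  -- c = a₁a₂a₃ is associated to t²
  set c := a₁ * (a₂ * a₃) with hcdef
  have hcO : c ∈ O := O.mul_mem ha₁O (O.mul_mem ha₂O ha₃O)
  have hc0 : c ≠ 0 := mul_ne_zero ha₁0 (mul_ne_zero ha₂0 ha₃0)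
  have hspanc : Ideal.span {c} = P₁ ^ 2 * (P₂ ^ 2 * P₃ ^ 2) := by
    rw [hcdef, ← Ideal.span_singleton_mul_span_singleton,
      ← Ideal.span_singleton_mul_span_singleton, hs₁, hs₂, hs₃]
  have hassoc_t2c : Associated (t ^ 2) c := by
    rw [← Ideal.span_singleton_eq_span_singleton, ← Ideal.span_singleton_pow, hst, hspanc]
    ring
  obtain ⟨u, hu⟩ := hassoc_t2c
  have htu0 : t * (u : R) ≠ 0 := mul_ne_zero ht0 u.ne_zero
  have hsptu : Ideal.span {t * (u : R)} = P₁ * P₂ * P₃ := by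
    have hassoc : Associated (t * (u : R)) t := Associated.symm ⟨u, rfl⟩
    rw [Ideal.span_singleton_eq_span_singleton.mpr hassoc, hst]
  have hcoptu : Ideal.span {t * (u : R)} ⊔ f = ⊤ := by rw [hsptu, ← hst]; exact hcopT
  -- t and t·u lie in H
  have htH : θ t ∈ H := tkAux_memH_coprime hH hfrac hfin ht0 hcopT
  have htuH : θ (t * (u : R)) ∈ H := tkAux_memH_coprime hH hfrac hfin htu0 hcoptu
  -- apply T2 to c = (t·u)·t
  have hceq : θ c = θ (t * (u : R)) * θ t := by
    rw [← map_mul]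
    congr 1
    rw [← hu]
    ring
  obtain ⟨v, w, hvO, hwO, hvw, hAv, hAw⟩ := hH.t2 c hcO hc0 _ htuH _ htH hceq
  obtain ⟨ε, hεG, hθv⟩ := tkAux_assocIn_isGH hAv
  obtain ⟨ε', hε'G, hθw⟩ := tkAux_assocIn_isGH hAw
  have hv0 : v ≠ 0 := fun h => hc0 (by rw [hvw, h, zero_mul])
  have hw0 : w ≠ 0 := fun h => hc0 (by rw [hvw, h, mul_zero])
  -- non-H-unit facts for t, t·u
  have hPtop : P₁ * P₂ * P₃ ≠ ⊤ := by
    intro h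
    have hle : P₁ * P₂ * P₃ ≤ P₁ := le_trans Ideal.mul_le_left Ideal.mul_le_left
    rw [h] at hle
    exact hp₁.ne_top (top_le_iff.mp hle)
  have htu_notG : ¬ IsGH H (θ (t * (u : R))) := by
    intro hG
    have := tkAux_isUnit_of_isGH hH hfin htu0 hcoptu hG
    have h2 : Ideal.span {t * (u : R)} = ⊤ := Ideal.span_singleton_eq_top.mpr this
    rw [hsptu] at h2
    exact hPtop h2
  have ht_notG : ¬ IsGH H (θ t) := by
    intro hG
    have := tkAux_isUnit_of_isGH hH hfin ht0 hcopT hG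
    have h2 : Ideal.span {t} = ⊤ := Ideal.span_singleton_eq_top.mpr this
    rw [hst] at h2
    exact hPtop h2
  -- factor span v as P₁^s₁ P₂^s₂ P₃^s₃
  have hprime₁ : Prime P₁ := Ideal.prime_of_isPrime hP₁0 hp₁
  have hprime₂ : Prime P₂ := Ideal.prime_of_isPrime hP₂0 hp₂
  have hprime₃ : Prime P₃ := Ideal.prime_of_isPrime hP₃0 hp₃
  have hprodvw : Ideal.span {v} * Ideal.span {w} = P₁ ^ 2 * (P₂ ^ 2 * P₃ ^ 2) := by
    rw [Ideal.span_singleton_mul_span_singleton, ← hvw, hspanc]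
  have hvdvd : Ideal.span {v} ∣ P₁ ^ 2 * (P₂ ^ 2 * P₃ ^ 2) :=
    ⟨Ideal.span {w}, hprodvw.symm⟩
  obtain ⟨A, Y, hA, hY, hvAY⟩ := exists_dvd_and_dvd_of_dvd_mul hvdvd
  obtain ⟨B, C, hB, hC, hYBC⟩ := exists_dvd_and_dvd_of_dvd_mul hY
  obtain ⟨s₁, hs₁le, hAs⟩ := (dvd_prime_pow hprime₁ _).mp hA
  obtain ⟨s₂, hs₂le, hBs⟩ := (dvd_prime_pow hprime₂ _).mp hB
  obtain ⟨s₃, hs₃le, hCs⟩ := (dvd_prime_pow hprime₃ _).mp hC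
  have hAeq := tkAux_assoc_ideal_eq hAs
  have hBeq := tkAux_assoc_ideal_eq hBs
  have hCeq := tkAux_assoc_ideal_eq hCs
  have hspanv : Ideal.span {v} = P₁ ^ s₁ * (P₂ ^ s₂ * P₃ ^ s₃) := by
    rw [hvAY, hYBC, hAeq, hBeq, hCeq]
  -- span of w by cancellation
  have hXne : P₁ ^ s₁ * (P₂ ^ s₂ * P₃ ^ s₃) ≠ 0 :=
    mul_ne_zero (pow_ne_zero _ hP₁0) (mul_ne_zero (pow_ne_zero _ hP₂0) (pow_ne_zero _ hP₃0))
  have hbig : P₁ ^ s₁ * (P₂ ^ s₂ * P₃ ^ s₃) * (P₁ ^ (2 - s₁) * (P₂ ^ (2 - s₂) * P₃ ^ (2 - s₃)))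
      = P₁ ^ 2 * (P₂ ^ 2 * P₃ ^ 2) := by
    have e₁ : P₁ ^ s₁ * P₁ ^ (2 - s₁) = P₁ ^ 2 := by rw [← pow_add]; congr 1; omega
    have e₂ : P₂ ^ s₂ * P₂ ^ (2 - s₂) = P₂ ^ 2 := by rw [← pow_add]; congr 1; omega
    have e₃ : P₃ ^ s₃ * P₃ ^ (2 - s₃) = P₃ ^ 2 := by rw [← pow_add]; congr 1; omega
    calc P₁ ^ s₁ * (P₂ ^ s₂ * P₃ ^ s₃) * (P₁ ^ (2 - s₁) * (P₂ ^ (2 - s₂) * P₃ ^ (2 - s₃)))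
        = (P₁ ^ s₁ * P₁ ^ (2 - s₁)) * ((P₂ ^ s₂ * P₂ ^ (2 - s₂)) * (P₃ ^ s₃ * P₃ ^ (2 - s₃))) := by
          ring
    _ = P₁ ^ 2 * (P₂ ^ 2 * P₃ ^ 2) := by rw [e₁, e₂, e₃]
  have hspanw : Ideal.span {w} = P₁ ^ (2 - s₁) * (P₂ ^ (2 - s₂) * P₃ ^ (2 - s₃)) := by
    apply mul_left_cancel₀ hXne
    rw [← hspanv, hprodvw, hspanv, hbig]
  -- class of span v is trivial, giving parity constraints
  have hsv_ne : Ideal.span {v} ≠ 0 := by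
    rw [ne_eq, Ideal.zero_eq_bot, Ideal.span_singleton_eq_bot]
    exact hv0
  have hsv_nzd : Ideal.span {v} ∈ (Ideal R)⁰ := mem_nonZeroDivisors_of_ne_zero hsv_ne
  have hmkv : ClassGroup.mk0 ⟨Ideal.span {v}, hsv_nzd⟩ = 1 :=
    (ClassGroup.mk0_eq_one_iff hsv_nzd).mpr ⟨⟨v, rfl⟩⟩
  have hsubv : (⟨Ideal.span {v}, hsv_nzd⟩ : (Ideal R)⁰)
      = ⟨P₁, h₁⟩ ^ s₁ * (⟨P₂, h₂⟩ ^ s₂ * ⟨P₃, h₃⟩ ^ s₃) := by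
    apply Subtype.ext
    simp only [Submonoid.coe_mul, SubmonoidClass.coe_pow]
    exact hspanv
  have hclassv : g₁ ^ (s₁ + s₃) * g₂ ^ (s₂ + s₃) = 1 := by
    have h1 : g₁ ^ s₁ * (g₂ ^ s₂ * (ClassGroup.mk0 ⟨P₃, h₃⟩) ^ s₃) = 1 := by
      rw [hg₁def, hg₂def, ← map_pow, ← map_pow, ← map_pow, ← map_mul, ← map_mul, ← hsubv, hmkv]
    rw [hcl] at h1
    calc g₁ ^ (s₁ + s₃) * g₂ ^ (s₂ + s₃)
        = (g₁ ^ s₁ * g₁ ^ s₃) * (g₂ ^ s₂ * g₂ ^ s₃) := by rw [pow_add, pow_add]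
    _ = (g₁ ^ s₁ * g₂ ^ s₂) * (g₁ ^ s₃ * g₂ ^ s₃) := mul_mul_mul_comm _ _ _ _
    _ = g₁ ^ s₁ * (g₂ ^ s₂ * (g₁ * g₂) ^ s₃) := by rw [mul_pow, mul_assoc]
    _ = 1 := h1
  obtain ⟨hpar₁, hpar₂⟩ := tkAux_order_two_indep hg₁sq hg₂sq hg₁ne hg₂ne hneq _ _ hclassv
  -- case analysis on the exponents
  have hcases : (s₁ = 1 ∧ s₂ = 1 ∧ s₃ = 1) ∨
      ((s₁ = 0 ∨ s₁ = 2) ∧ (s₂ = 0 ∨ s₂ = 2) ∧ (s₃ = 0 ∨ s₃ = 2)) := by omega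
  rcases hcases with ⟨e1, e2, e3⟩ | ⟨he₁, he₂, he₃⟩
  · -- success case
    refine ⟨v, hvO, ?_⟩
    rw [hspanv, e1, e2, e3, pow_one, pow_one, pow_one, mul_assoc]
  -- remaining: all exponents even; derive a contradiction
  exfalso
  obtain ⟨εi, hεiG, hεεi⟩ := hεG.inv
  obtain ⟨ε'i, hε'iG, hεε'i⟩ := hε'G.inv
  have hθtu : θ (t * (u : R)) = θ v * εi := by
    rw [hθv, mul_assoc, hεεi, mul_one]
  have hθt : θ t = θ w * ε'i := by
    rw [hθw, mul_assoc, hεε'i, mul_one]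
  -- helper: from span x = P² for x ∈ {v, w}, produce the contradiction via tkAux_contra
  -- Case analysis
  rcases he₁ with he₁ | he₁ <;> rcases he₂ with he₂ | he₂ <;> rcases he₃ with he₃ | he₃
  · -- (0,0,0): v is a unit
    have hvtop : Ideal.span {v} = ⊤ := by
      rw [hspanv, he₁, he₂, he₃]; try simp
    have hvunit : IsUnit v := Ideal.span_singleton_eq_top.mp hvtop
    exact htu_notG (hθtu ▸ (tkAux_unit_isGH hH hfrac hfin hvunit).mul hεiG)
  · -- (0,0,2): span v = P₃²
    have hsv : Ideal.span {v} = P₃ ^ 2 := by rw [hspanv, he₁, he₂, he₃]; try simp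
    have hassoc : Associated a₃ v := by
      rw [← Ideal.span_singleton_eq_span_singleton, hs₃, hsv]
    obtain ⟨u₃, hu₃⟩ := hassoc
    have hδ : IsGH H ((θ) (u₃ : R) * εi) := (tkAux_unit_isGH hH hfrac hfin u₃.isUnit).mul hεiG
    have heqc : θ (t * (u : R)) = θ a₃ * ((θ) (u₃ : R) * εi) := by
      rw [hθtu, ← hu₃, map_mul]; ring
    exact tkAux_contra hH hfrac hfin hp₃ hP₃0 hnp₃ hp₁.ne_top hp₂.ne_top hcop₃ hcop₁ hcop₂
      ha₃O ha₃0 hs₃ ha₁O ha₁0 hs₁ ha₂O ha₂0 hs₂ ht0 (by rw [hst]; try ring) u.isUnit hδ heqc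
  · -- (0,2,0): span v = P₂²
    have hsv : Ideal.span {v} = P₂ ^ 2 := by rw [hspanv, he₁, he₂, he₃]; try simp
    have hassoc : Associated a₂ v := by
      rw [← Ideal.span_singleton_eq_span_singleton, hs₂, hsv]
    obtain ⟨u₃, hu₃⟩ := hassoc
    have hδ : IsGH H ((θ) (u₃ : R) * εi) := (tkAux_unit_isGH hH hfrac hfin u₃.isUnit).mul hεiG
    have heqc : θ (t * (u : R)) = θ a₂ * ((θ) (u₃ : R) * εi) := by
      rw [hθtu, ← hu₃, map_mul]; ring
    exact tkAux_contra hH hfrac hfin hp₂ hP₂0 hnp₂ hp₁.ne_top hp₃.ne_top hcop₂ hcop₁ hcop₃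
      ha₂O ha₂0 hs₂ ha₁O ha₁0 hs₁ ha₃O ha₃0 hs₃ ht0 (by rw [hst]; try ring) u.isUnit hδ heqc
  · -- (0,2,2): span w = P₁²
    have hsw : Ideal.span {w} = P₁ ^ 2 := by rw [hspanw, he₁, he₂, he₃]; try simp
    have hassoc : Associated a₁ w := by
      rw [← Ideal.span_singleton_eq_span_singleton, hs₁, hsw]
    obtain ⟨u₃, hu₃⟩ := hassoc
    have hδ : IsGH H ((θ) (u₃ : R) * ε'i) := (tkAux_unit_isGH hH hfrac hfin u₃.isUnit).mul hε'iG
    have heqc : θ (t * (1 : R)) = θ a₁ * ((θ) (u₃ : R) * ε'i) := by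
      rw [mul_one, hθt, ← hu₃, map_mul]; ring
    exact tkAux_contra hH hfrac hfin hp₁ hP₁0 hnp₁ hp₂.ne_top hp₃.ne_top hcop₁ hcop₂ hcop₃
      ha₁O ha₁0 hs₁ ha₂O ha₂0 hs₂ ha₃O ha₃0 hs₃ ht0 (by rw [hst]; try ring) isUnit_one hδ heqc
  · -- (2,0,0): span v = P₁²
    have hsv : Ideal.span {v} = P₁ ^ 2 := by rw [hspanv, he₁, he₂, he₃]; try simp
    have hassoc : Associated a₁ v := by
      rw [← Ideal.span_singleton_eq_span_singleton, hs₁, hsv]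
    obtain ⟨u₃, hu₃⟩ := hassoc
    have hδ : IsGH H ((θ) (u₃ : R) * εi) := (tkAux_unit_isGH hH hfrac hfin u₃.isUnit).mul hεiG
    have heqc : θ (t * (u : R)) = θ a₁ * ((θ) (u₃ : R) * εi) := by
      rw [hθtu, ← hu₃, map_mul]; ring
    exact tkAux_contra hH hfrac hfin hp₁ hP₁0 hnp₁ hp₂.ne_top hp₃.ne_top hcop₁ hcop₂ hcop₃
      ha₁O ha₁0 hs₁ ha₂O ha₂0 hs₂ ha₃O ha₃0 hs₃ ht0 (by rw [hst]; try ring) u.isUnit hδ heqc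
  · -- (2,0,2): span w = P₂²
    have hsw : Ideal.span {w} = P₂ ^ 2 := by rw [hspanw, he₁, he₂, he₃]; try simp
    have hassoc : Associated a₂ w := by
      rw [← Ideal.span_singleton_eq_span_singleton, hs₂, hsw]
    obtain ⟨u₃, hu₃⟩ := hassoc
    have hδ : IsGH H ((θ) (u₃ : R) * ε'i) := (tkAux_unit_isGH hH hfrac hfin u₃.isUnit).mul hε'iG
    have heqc : θ (t * (1 : R)) = θ a₂ * ((θ) (u₃ : R) * ε'i) := by
      rw [mul_one, hθt, ← hu₃, map_mul]; ring
    exact tkAux_contra hH hfrac hfin hp₂ hP₂0 hnp₂ hp₁.ne_top hp₃.ne_top hcop₂ hcop₁ hcop₃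
      ha₂O ha₂0 hs₂ ha₁O ha₁0 hs₁ ha₃O ha₃0 hs₃ ht0 (by rw [hst]; try ring) isUnit_one hδ heqc
  · -- (2,2,0): span w = P₃²
    have hsw : Ideal.span {w} = P₃ ^ 2 := by rw [hspanw, he₁, he₂, he₃]; try simp
    have hassoc : Associated a₃ w := by
      rw [← Ideal.span_singleton_eq_span_singleton, hs₃, hsw]
    obtain ⟨u₃, hu₃⟩ := hassoc
    have hδ : IsGH H ((θ) (u₃ : R) * ε'i) := (tkAux_unit_isGH hH hfrac hfin u₃.isUnit).mul hε'iG
    have heqc : θ (t * (1 : R)) = θ a₃ * ((θ) (u₃ : R) * ε'i) := by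
      rw [mul_one, hθt, ← hu₃, map_mul]; ring
    exact tkAux_contra hH hfrac hfin hp₃ hP₃0 hnp₃ hp₁.ne_top hp₂.ne_top hcop₃ hcop₁ hcop₂
      ha₃O ha₃0 hs₃ ha₁O ha₁0 hs₁ ha₂O ha₂0 hs₂ ht0 (by rw [hst]; try ring) isUnit_one hδ heqc
  · -- (2,2,2): w is a unit
    have hwtop : Ideal.span {w} = ⊤ := by
      rw [hspanw, he₁, he₂, he₃]; try simp
    have hwunit : IsUnit w := Ideal.span_singleton_eq_top.mp hwtop
    exact ht_notG (hθt ▸ (tkAux_unit_isGH hH hfrac hfin hwunit).mul hε'iG)
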